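/- arXiv:2004.02437 — 2 statements merged into one kernel-verified Lean document; each statement's English description precedes it below -/
import Mathlib

section
/- In a complete graph whose edge weights satisfy the triangle inequality, for any nonempty subset S of the vertices, the minimum weight of a Hamiltonian cycle on the complete subgraph induced by S is at most the minimum weight of a Hamiltonian cycle on the whole vertex set, provided |S| ≥ 3 and |V| ≥ 3. -/
open scoped Classical

/-- Cyclic weight of a closed tour given by the vertex list `l`:
the sum of `ρ` over consecutive pairs, including the pair closing the cycle. -/
def cycWeight {V : Type*} (ρ : V → V → ℝ) (l : List V) : ℝ :=
  ((l.zip (l.rotate 1)).map fun p => ρ p.1 p.2).sum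

/-- The (cyclic) list of edges of a closed tour given by the vertex list `l`. -/
def cycEdges {V : Type*} (l : List V) : List (Sym2 V) :=
  (l.zip (l.rotate 1)).map (Function.uncurry Sym2.mk)

/-- The list of endpoints of a list of matching pairs. -/
def matchVerts {V : Type*} (M : List (V × V)) : List V :=
  M.flatMap fun p => [p.1, p.2]

/-- `M` is a perfect matching on the vertex set `X`: a partition of `X` into pairs. -/
def IsPM {V : Type*} [DecidableEq V] (X : Finset V) (M : List (V × V)) : Prop :=
  (matchVerts M).Nodup ∧ (matchVerts M).toFinset = X

/-- The weight of a matching: the sum of weights of its pairs. -/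
def mWeight {V : Type*} (ρ : V → V → ℝ) (M : List (V × V)) : ℝ :=
  (M.map fun p => ρ p.1 p.2).sum

/-- Total edge weight of a graph. -/
noncomputable def gWeight {V : Type*} [Fintype V] (f : Sym2 V → ℝ) (T : SimpleGraph V) : ℝ :=
  ∑ e ∈ T.edgeSet.toFinset, f e

/-- The weight of a walk in the graph `G` with edge weights `f`
(edges are counted with multiplicity). -/
def walkWeight {V : Type*} (G : SimpleGraph V) (f : Sym2 V → ℝ) {u v : V} (p : G.Walk u v) : ℝ :=
  (p.edges.map f).sum

/-- Shortest-path distance between `i` and `j` (metric closure of `G`). -/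
noncomputable def sdist {V : Type*} (G : SimpleGraph V) (f : Sym2 V → ℝ) (i j : V) : ℝ :=
  sInf {x | ∃ p : G.Walk i j, x = walkWeight G f p}

namespace MinHamAux

variable {V : Type*}

/-- Path weight from `x` through the list to `y`. -/
def D (ρ : V → V → ℝ) (x y : V) : List V → ℝ
  | [] => ρ x y
  | a :: t => ρ x a + D ρ a y t

lemma zip_sum (ρ : V → V → ℝ) (y : V) (t : List V) : ∀ x,
    (((x :: t).zip (t ++ [y])).map fun p => ρ p.1 p.2).sum = D ρ x y t := by
  induction t with
  | nil => intro x; simp [D]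
  | cons a t ih => intro x; simp only [List.cons_append, List.zip_cons_cons, List.map_cons,
      List.sum_cons, D, ih a]

lemma cycWeight_cons (ρ : V → V → ℝ) (x : V) (t : List V) :
    cycWeight ρ (x :: t) = D ρ x x t := by
  rw [cycWeight, List.rotate_cons_succ, List.rotate_zero, zip_sum]

lemma D_append (ρ : V → V → ℝ) (x y : V) (t : List V) : ∀ a,
    D ρ a y (t ++ [x]) = D ρ a x t + ρ x y := by
  induction t with
  | nil => intro a; simp [D]
  | cons b t ih => intro a; simp only [List.cons_append, D, List.append_eq, ih b]; ring

lemma cycWeight_rotate_one (ρ : V → V → ℝ) (l : List V) :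
    cycWeight ρ (l.rotate 1) = cycWeight ρ l := by
  cases l with
  | nil => simp
  | cons x t =>
    rw [List.rotate_cons_succ, List.rotate_zero]
    cases t with
    | nil => simp
    | cons a t' =>
      rw [List.cons_append, cycWeight_cons, cycWeight_cons, D_append]
      simp only [D]; ring

lemma cycWeight_rotate (ρ : V → V → ℝ) (l : List V) (n : ℕ) :
    cycWeight ρ (l.rotate n) = cycWeight ρ l := by
  induction n with
  | zero => simp
  | succ n ih => rw [← List.rotate_rotate, cycWeight_rotate_one, ih]

lemma D_cons_le (ρ : V → V → ℝ) (htri : ∀ i j k, ρ i j ≤ ρ i k + ρ k j)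
    (x y a : V) (l : List V) : D ρ x y l ≤ ρ x a + D ρ a y l := by
  cases l with
  | nil => simpa [D] using htri x y a
  | cons b t =>
    simp only [D]
    have := htri x b a
    linarith

lemma D_sublist_le (ρ : V → V → ℝ) (htri : ∀ i j k, ρ i j ≤ ρ i k + ρ k j)
    {t₁ t₂ : List V} (h : t₁.Sublist t₂) : ∀ x y, D ρ x y t₁ ≤ D ρ x y t₂ := by
  induction h with
  | slnil => intro x y; exact le_refl _
  | @cons t₁ t₂ a h ih =>
      intro x y
      exact (ih x y).trans (by simpa [D] using D_cons_le ρ htri x y a t₂)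
  | @cons_cons t₁ t₂ a h ih =>
      intro x y
      simp only [D]
      exact add_le_add_right (ih a y) _

lemma cycWeight_nonneg (ρ : V → V → ℝ) (hnn : ∀ i j, 0 ≤ ρ i j) (l : List V) :
    0 ≤ cycWeight ρ l := by
  apply List.sum_nonneg
  intro a ha
  simp only [List.mem_map] at ha
  obtain ⟨p, _, rfl⟩ := ha
  exact hnn _ _

end MinHamAux

/-- Triangle inequality: for any subset `S` of the vertices with `|S| ≥ 3`,
the minimum weight of a Hamiltonian cycle on `S` is at most the minimum weight
of a Hamiltonian cycle on the whole vertex set. -/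


theorem min_ham_on_subset_le {V : Type*} [Fintype V] [DecidableEq V]
    (ρ : V → V → ℝ) (hnn : ∀ i j, 0 ≤ ρ i j) (hsym : ∀ i j, ρ i j = ρ j i)
    (htri : ∀ i j k, ρ i j ≤ ρ i k + ρ k j)
    (hV : 3 ≤ Fintype.card V) (S : Finset V) (hS : 3 ≤ S.card) :
    sInf {x | ∃ l : List V, l.Nodup ∧ l.toFinset = S ∧ x = cycWeight ρ l}
      ≤ sInf {x | ∃ l : List V, l.Nodup ∧ l.toFinset = Finset.univ ∧ x = cycWeight ρ l} := by
  classical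
  have hSne : S.Nonempty := Finset.card_pos.mp (by omega)
  set A := {x | ∃ l : List V, l.Nodup ∧ l.toFinset = S ∧ x = cycWeight ρ l} with hA
  have hAbdd : BddBelow A := by
    refine ⟨0, fun x hx => ?_⟩
    obtain ⟨l, _, _, rfl⟩ := hx
    exact MinHamAux.cycWeight_nonneg ρ hnn l
  have hBne : Set.Nonempty {x | ∃ l : List V, l.Nodup ∧ l.toFinset = Finset.univ ∧
      x = cycWeight ρ l} :=
    ⟨cycWeight ρ Finset.univ.toList, Finset.univ.toList, Finset.nodup_toList _,
      Finset.toList_toFinset _, rfl⟩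
  apply le_csInf hBne
  rintro b ⟨l, hnd, hfin, rfl⟩
  obtain ⟨s, hs⟩ := hSne
  have hsl : s ∈ l := by rw [← List.mem_toFinset, hfin]; exact Finset.mem_univ s
  obtain ⟨t₁, t₂, rfl⟩ := List.append_of_mem hsl
  set l₂ : List V := s :: (t₂ ++ t₁) with hl₂
  have hrot : (t₁ ++ s :: t₂).rotate t₁.length = l₂ := by
    rw [List.rotate_eq_drop_append_take (by simp)]
    rw [List.drop_left, List.take_left, hl₂]
    simp
  have hperm : l₂.Perm (t₁ ++ s :: t₂) := hrot ▸ List.rotate_perm _ _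
  have hnd₂ : l₂.Nodup := hperm.nodup_iff.mpr hnd
  have hfin₂ : l₂.toFinset = Finset.univ := by
    rw [← hfin]
    ext x
    rw [List.mem_toFinset, List.mem_toFinset, hperm.mem_iff]
  -- the shortcut tour on S
  set t' : List V := (t₂ ++ t₁).filter (· ∈ S) with ht'
  have hsub : t'.Sublist (t₂ ++ t₁) := List.filter_sublist
  set l' : List V := s :: t' with hl'
  have hl'filter : l' = l₂.filter (· ∈ S) := by
    rw [hl₂, hl', ht', List.filter_cons]
    simp [hs]
  have hnd' : l'.Nodup := by rw [hl'filter]; exact hnd₂.filter _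
  have hfin' : l'.toFinset = S := by
    ext x
    rw [hl'filter, List.mem_toFinset, List.mem_filter]
    constructor
    · rintro ⟨-, hx⟩; simpa using hx
    · intro hx
      refine ⟨?_, by simpa using hx⟩
      rw [← List.mem_toFinset, hfin₂]; exact Finset.mem_univ x
  have hle : cycWeight ρ l' ≤ cycWeight ρ (t₁ ++ s :: t₂) := by
    calc cycWeight ρ l' = MinHamAux.D ρ s s t' := MinHamAux.cycWeight_cons ρ s t'
    _ ≤ MinHamAux.D ρ s s (t₂ ++ t₁) := MinHamAux.D_sublist_le ρ htri hsub s s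
    _ = cycWeight ρ l₂ := (MinHamAux.cycWeight_cons ρ s _).symm
    _ = cycWeight ρ (t₁ ++ s :: t₂) := by rw [← hrot, MinHamAux.cycWeight_rotate]
  exact le_trans (csInf_le hAbdd ⟨l', hnd', hfin', rfl⟩) hle
end

section
/- If L* is a Hamiltonian cycle in the metric closure of a connected positively-weighted graph G̃ with d-weight at most α times the minimum Hamiltonian cycle d-weight, then replacing each edge of L* by a shortest path in G̃ yields a closed walk through all vertices of G̃ of weight at most α times the minimum weight of a closed walk through all vertices of G̃. -/
open scoped Classical

/-! ### Auxiliary material -/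

set_option linter.unusedSectionVars false

section Helpers
variable {V : Type*} [Fintype V] [DecidableEq V] {G : SimpleGraph V} {f : Sym2 V → ℝ}

lemma wW_nonneg (hnn : ∀ e ∈ G.edgeSet, 0 ≤ f e) {u v : V} (p : G.Walk u v) :
    0 ≤ walkWeight G f p := by
  apply List.sum_nonneg
  intro x hx
  obtain ⟨e, he, rfl⟩ := List.mem_map.mp hx
  exact hnn e (p.edges_subset_edgeSet he)

lemma wW_append (u v w : V) (p : G.Walk u v) (q : G.Walk v w) :
    walkWeight G f (p.append q) = walkWeight G f p + walkWeight G f q := by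
  simp [walkWeight, SimpleGraph.Walk.edges_append]

lemma sdist_set_nonempty (hconn : G.Connected) (i j : V) :
    {x | ∃ p : G.Walk i j, x = walkWeight G f p}.Nonempty := by
  obtain ⟨p⟩ := hconn.preconnected i j
  exact ⟨walkWeight G f p, p, rfl⟩

lemma sdist_bddBelow (hnn : ∀ e ∈ G.edgeSet, 0 ≤ f e) (i j : V) :
    BddBelow {x | ∃ p : G.Walk i j, x = walkWeight G f p} :=
  ⟨0, by rintro x ⟨p, rfl⟩; exact wW_nonneg hnn p⟩

lemma sdist_le_wW (hnn : ∀ e ∈ G.edgeSet, 0 ≤ f e) {i j : V} (p : G.Walk i j) :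
    sdist G f i j ≤ walkWeight G f p :=
  csInf_le (sdist_bddBelow hnn i j) ⟨p, rfl⟩

lemma sdist_attained (hconn : G.Connected) (hnn : ∀ e ∈ G.edgeSet, 0 ≤ f e) (i j : V) :
    ∃ p : G.Walk i j, walkWeight G f p = sdist G f i j := by
  have hne : Nonempty (G.Path i j) := by
    obtain ⟨p⟩ := hconn.preconnected i j
    exact ⟨⟨p.bypass, p.bypass_isPath⟩⟩
  obtain ⟨p₀, -, hmin⟩ := Finset.exists_min_image (Finset.univ : Finset (G.Path i j))
    (fun p => walkWeight G f p.1) ⟨Classical.arbitrary _, Finset.mem_univ _⟩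
  refine ⟨p₀.1, le_antisymm ?_ (sdist_le_wW hnn _)⟩
  apply le_csInf (sdist_set_nonempty hconn i j)
  rintro x ⟨q, rfl⟩
  have h1 : walkWeight G f p₀.1 ≤ walkWeight G f q.bypass :=
    hmin ⟨q.bypass, q.bypass_isPath⟩ (Finset.mem_univ _)
  refine h1.trans ?_
  have hsub : List.Subperm q.bypass.edges q.edges :=
    (q.bypass_isPath.edges_nodup).subperm q.edges_bypass_subset
  obtain ⟨l, hperm, hsl⟩ := hsub
  calc walkWeight G f q.bypass = (l.map f).sum := by
        rw [walkWeight]; exact List.Perm.sum_eq (hperm.map f).symm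
    _ ≤ (q.edges.map f).sum := by
        refine List.Sublist.sum_le_sum (hsl.map f) ?_
        intro x hx
        obtain ⟨e, he, rfl⟩ := List.mem_map.mp hx
        exact hnn e (q.edges_subset_edgeSet he)

lemma sdist_nonneg (hconn : G.Connected) (hnn : ∀ e ∈ G.edgeSet, 0 ≤ f e) (i j : V) :
    0 ≤ sdist G f i j :=
  le_csInf (sdist_set_nonempty hconn i j) (by rintro x ⟨p, rfl⟩; exact wW_nonneg hnn p)

lemma sdist_self (hconn : G.Connected) (hnn : ∀ e ∈ G.edgeSet, 0 ≤ f e) (i : V) :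
    sdist G f i i = 0 :=
  le_antisymm (by simpa [walkWeight] using sdist_le_wW (f := f) hnn (SimpleGraph.Walk.nil' i))
    (sdist_nonneg hconn hnn i i)

lemma sdist_triangle (hconn : G.Connected) (hnn : ∀ e ∈ G.edgeSet, 0 ≤ f e) (a b c : V) :
    sdist G f a c ≤ sdist G f a b + sdist G f b c := by
  obtain ⟨p, hp⟩ := sdist_attained hconn hnn a b
  obtain ⟨q, hq⟩ := sdist_attained hconn hnn b c
  calc sdist G f a c ≤ walkWeight G f (p.append q) := sdist_le_wW hnn _
    _ = _ := by rw [wW_append, hp, hq]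

lemma sdist_le_adj (hnn : ∀ e ∈ G.edgeSet, 0 ≤ f e) {a b : V} (h : G.Adj a b) :
    sdist G f a b ≤ f s(a, b) := by
  simpa [walkWeight] using sdist_le_wW (f := f) hnn (SimpleGraph.Walk.cons h (.nil' b))

end Helpers

/-- Weight of a (non-cyclic) chain of vertices. -/
def chainW {V : Type*} (ρ : V → V → ℝ) : List V → ℝ
  | [] => 0
  | [_] => 0
  | a :: b :: l => ρ a b + chainW ρ (b :: l)

section ChainW
variable {V : Type*} {ρ : V → V → ℝ}

lemma chainW_cons_cons (a b : V) (l : List V) :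
    chainW ρ (a :: b :: l) = ρ a b + chainW ρ (b :: l) := rfl

lemma chainW_zip (l : List V) (a w : V) :
    chainW ρ (a :: (l ++ [w])) = (((a :: l).zip (l ++ [w])).map fun p => ρ p.1 p.2).sum := by
  induction l generalizing a with
  | nil => simp [chainW]
  | cons b l ih => simp [chainW_cons_cons, ih b]

lemma cycWeight_eq_chainW (a : V) (t : List V) :
    cycWeight ρ (a :: t) = chainW ρ (a :: (t ++ [a])) := by
  rw [chainW_zip, cycWeight]
  congr 1
  rw [show (1 : ℕ) = 0 + 1 from rfl, List.rotate_cons_succ, List.rotate_zero]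

lemma chainW_split (l1 l2 : List V) (a b : V) :
    chainW ρ (a :: l1 ++ b :: l2) = chainW ρ (a :: l1 ++ [b]) + chainW ρ (b :: l2) := by
  induction l1 generalizing a with
  | nil => simp [chainW_cons_cons, chainW]
  | cons c l1 ih =>
      have := ih c
      simp only [List.cons_append] at *
      rw [chainW_cons_cons, chainW_cons_cons, this]
      ring

lemma le_chainW (htri : ∀ x y z : V, ρ x z ≤ ρ x y + ρ y z) (l : List V) (a b : V) :
    ρ a b ≤ chainW ρ (a :: (l ++ [b])) := by
  induction l generalizing a with
  | nil => simp [chainW]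
  | cons c l ih =>
      calc ρ a b ≤ ρ a c + ρ c b := htri a c b
        _ ≤ ρ a c + chainW ρ (c :: (l ++ [b])) := by linarith [ih c]
        _ = _ := (chainW_cons_cons ..).symm

lemma exists_decomp {V : Type*} {t : List V} {b : V} {t'' : List V}
    (h : List.Sublist (b :: t'') t) :
    ∃ t1 t2, t = t1 ++ b :: t2 ∧ List.Sublist t'' t2 := by
  induction t with
  | nil => simp at h
  | cons x t ih =>
      cases h with
      | cons _ h =>
          obtain ⟨t1, t2, rfl, hs⟩ := ih h
          exact ⟨x :: t1, t2, rfl, hs⟩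
      | cons_cons _ h => exact ⟨[], t, rfl, h⟩

lemma chainW_sublist {V : Type*} {ρ : V → V → ℝ}
    (htri : ∀ x y z : V, ρ x z ≤ ρ x y + ρ y z) :
    ∀ (n : ℕ) (t t' : List V) (a b : V), t.length ≤ n → List.Sublist t' t →
      chainW ρ (a :: (t' ++ [b])) ≤ chainW ρ (a :: (t ++ [b])) := by
  intro n
  induction n with
  | zero =>
      intro t t' a b hlen hsl
      have : t = [] := List.length_eq_zero_iff.mp (Nat.le_zero.mp hlen)
      subst this
      have : t' = [] := List.sublist_nil.mp hsl
      subst this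
      exact le_refl _
  | succ n ih =>
      intro t t' a b hlen hsl
      cases t' with
      | nil => simpa [chainW] using le_chainW htri t a b
      | cons c t'' =>
          obtain ⟨t1, t2, rfl, hs⟩ := exists_decomp hsl
          have hlen2 : t2.length ≤ n := by
            have := hlen
            simp [List.length_append] at this
            omega
          calc chainW ρ (a :: ((c :: t'') ++ [b]))
              = ρ a c + chainW ρ (c :: (t'' ++ [b])) := by
                simp [chainW_cons_cons]
            _ ≤ ρ a c + chainW ρ (c :: (t2 ++ [b])) := by
                linarith [ih t2 t'' c b hlen2 hs]
            _ ≤ chainW ρ (a :: (t1 ++ [c])) + chainW ρ (c :: (t2 ++ [b])) := by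
                linarith [le_chainW htri t1 a c]
            _ = chainW ρ (a :: ((t1 ++ c :: t2) ++ [b])) := by
                rw [show a :: ((t1 ++ c :: t2) ++ [b]) = (a :: t1) ++ c :: (t2 ++ [b]) by simp]
                exact (chainW_split t1 (t2 ++ [b]) a c).symm

end ChainW

/-- Concatenation of chosen walks along a list of vertices. -/
def walkOf {V : Type*} {G : SimpleGraph V} (sp : ∀ i j : V, G.Walk i j) :
    (a : V) → (l : List V) → (w : V) → G.Walk a w
  | a, [], w => sp a w
  | a, b :: l, w => (sp a b).append (walkOf sp b l w)

section WalkOf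
variable {V : Type*} [Fintype V] [DecidableEq V] {G : SimpleGraph V} {f : Sym2 V → ℝ} {ρ : V → V → ℝ}

lemma walkOf_weight (sp : ∀ i j : V, G.Walk i j)
    (hsp : ∀ i j, walkWeight G f (sp i j) = ρ i j) (l : List V) (a w : V) :
    walkWeight G f (walkOf sp a l w) = chainW ρ (a :: (l ++ [w])) := by
  induction l generalizing a with
  | nil => simpa [walkOf, chainW] using hsp a w
  | cons b l ih =>
      show walkWeight G f ((sp a b).append (walkOf sp b l w)) = _
      rw [wW_append, hsp, ih b, List.cons_append, chainW_cons_cons]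

lemma walkOf_support (sp : ∀ i j : V, G.Walk i j) (l : List V) (a w : V) :
    ∀ x ∈ a :: l, x ∈ (walkOf sp a l w).support := by
  induction l generalizing a with
  | nil =>
      intro x hx
      simp only [List.mem_singleton] at hx
      subst hx
      exact (sp x w).start_mem_support
  | cons b l ih =>
      intro x hx
      show x ∈ ((sp a b).append (walkOf sp b l w)).support
      rw [SimpleGraph.Walk.mem_support_append_iff]
      rcases List.mem_cons.mp hx with rfl | hx
      · exact Or.inl (sp x b).start_mem_support
      · exact Or.inr (ih b x hx)

lemma chainW_support_le (hρ_adj : ∀ a b : V, G.Adj a b → ρ a b ≤ f s(a, b)) :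
    ∀ {a b : V} (q : G.Walk a b) (z : V),
      chainW ρ (q.support ++ [z]) ≤ walkWeight G f q + ρ b z := by
  intro a b q
  induction q with
  | nil => intro z; simp [chainW, walkWeight]
  | @cons u c b h p ih =>
      intro z
      rw [SimpleGraph.Walk.support_cons]
      rw [p.support_eq_cons]
      rw [show (u :: c :: p.support.tail) ++ [z] = u :: c :: (p.support.tail ++ [z]) by rfl]
      rw [chainW_cons_cons, show c :: (p.support.tail ++ [z]) = (c :: p.support.tail) ++ [z] by rfl,
        ← p.support_eq_cons]
      have h1 := ih z
      have h2 : ρ u c ≤ f s(u, c) := hρ_adj u c h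
      have h3 : walkWeight G f (SimpleGraph.Walk.cons h p) = f s(u, c) + walkWeight G f p := by
        simp [walkWeight, SimpleGraph.Walk.edges_cons]
      linarith

end WalkOf

/-- If `L*` is a Hamiltonian cycle in the metric closure of `G̃` whose
`d`-weight is at most `α` times the minimum Hamiltonian cycle `d`-weight, then
there is a closed walk through all vertices of `G̃` (obtained by replacing each
edge of `L*` by a shortest path) whose weight is at most `α` times the minimum
weight of a closed walk through all vertices of `G̃`. -/
theorem approx_transfers_to_graph {V : Type*} [Fintype V] [DecidableEq V]
    (G : SimpleGraph V) (hconn : G.Connected) (hV : 3 ≤ Fintype.card V)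
    (f : Sym2 V → ℝ) (hpos : ∀ e ∈ G.edgeSet, 0 < f e)
    (α : ℝ) (hα : 1 ≤ α)
    (Lstar : List V) (hLstar : Lstar.Nodup) (hLspan : Lstar.toFinset = Finset.univ)
    (hLw : cycWeight (fun a b => sdist G f a b) Lstar ≤
      α * sInf {x | ∃ l : List V, l.Nodup ∧ l.toFinset = Finset.univ ∧
        x = cycWeight (fun a b => sdist G f a b) l}) :
    ∃ (v : V) (p : G.Walk v v), p.support.toFinset = Finset.univ ∧
      walkWeight G f p ≤
        α * sInf {x | ∃ (u : V) (q : G.Walk u u),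
          q.support.toFinset = Finset.univ ∧ x = walkWeight G f q} := by
  classical
  have hnn : ∀ e ∈ G.edgeSet, 0 ≤ f e := fun e he => (hpos e he).le
  set ρ : V → V → ℝ := fun a b => sdist G f a b with hρ
  have htri : ∀ x y z : V, ρ x z ≤ ρ x y + ρ y z := fun x y z =>
    sdist_triangle hconn hnn x y z
  have hρ_adj : ∀ a b : V, G.Adj a b → ρ a b ≤ f s(a, b) := fun a b h =>
    sdist_le_adj hnn h
  have hρ_self : ∀ a : V, ρ a a = 0 := fun a => sdist_self hconn hnn a
  have hρ_nonneg : ∀ a b : V, 0 ≤ ρ a b := fun a b => sdist_nonneg hconn hnn a b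
  choose sp hsp using fun i j => sdist_attained hconn hnn i j
  -- Lstar is nonempty
  obtain ⟨a, t, rfl⟩ : ∃ a t, Lstar = a :: t := by
    cases Lstar with
    | nil =>
        exfalso
        have : (Finset.univ : Finset V).Nonempty :=
          Finset.univ_nonempty_iff.mpr (Fintype.card_pos_iff.mp (by omega))
        rw [← hLspan] at this
        simpa using this
    | cons a t => exact ⟨a, t, rfl⟩
  -- the constructed walk
  refine ⟨a, walkOf sp a t a, ?_, ?_⟩
  · apply Finset.eq_univ_iff_forall.mpr
    intro x
    rw [List.mem_toFinset]
    apply walkOf_support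
    rw [← List.mem_toFinset, hLspan]
    exact Finset.mem_univ x
  · have hwp : walkWeight G f (walkOf sp a t a) = cycWeight ρ (a :: t) := by
      rw [walkOf_weight sp hsp, cycWeight_eq_chainW]
    rw [hwp]
    -- the set of Hamiltonian-cycle weights
    set SHC : Set ℝ := {x | ∃ l : List V, l.Nodup ∧ l.toFinset = Finset.univ ∧
        x = cycWeight ρ l} with hSHC
    set SW : Set ℝ := {x | ∃ (u : V) (q : G.Walk u u),
        q.support.toFinset = Finset.univ ∧ x = walkWeight G f q} with hSW
    have hSHC_bdd : BddBelow SHC := by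
      refine ⟨0, ?_⟩
      rintro x ⟨l, -, -, rfl⟩
      apply List.sum_nonneg
      intro y hy
      obtain ⟨p, -, rfl⟩ := List.mem_map.mp hy
      exact hρ_nonneg _ _
    have hSW_ne : SW.Nonempty := by
      refine ⟨walkWeight G f (walkOf sp a t a), a, walkOf sp a t a, ?_, rfl⟩
      apply Finset.eq_univ_iff_forall.mpr
      intro x
      rw [List.mem_toFinset]
      apply walkOf_support
      rw [← List.mem_toFinset, hLspan]
      exact Finset.mem_univ x
    have hkey : sInf SHC ≤ sInf SW := by
      apply le_csInf hSW_ne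
      rintro x ⟨u, q, hq, rfl⟩
      -- shortcut the walk q to a Hamiltonian cycle
      set s : List V := q.support.tail with hs
      have hsupp : q.support = u :: s := q.support_eq_cons
      set t'' : List V := (s.filter (· ≠ u)).dedup with ht''
      have htsub : List.Sublist t'' s := (List.dedup_sublist _).trans List.filter_sublist
      have hu_not : u ∉ t'' := by
        intro hu
        rw [ht'', List.mem_dedup, List.mem_filter] at hu
        simpa using hu.2
      have hnodup : (u :: t'').Nodup := List.nodup_cons.mpr ⟨hu_not, List.nodup_dedup _⟩
      have hfin : (u :: t'').toFinset = Finset.univ := by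
        apply Finset.eq_univ_iff_forall.mpr
        intro x
        rw [List.mem_toFinset, List.mem_cons]
        by_cases hxu : x = u
        · exact Or.inl hxu
        · right
          rw [ht'', List.mem_dedup, List.mem_filter]
          have hxs : x ∈ q.support := by
            rw [← List.mem_toFinset, hq]; exact Finset.mem_univ x
          rw [hsupp, List.mem_cons] at hxs
          rcases hxs with rfl | hxs
          · exact absurd rfl hxu
          · exact ⟨hxs, by simpa using hxu⟩
      have hle : cycWeight ρ (u :: t'') ≤ walkWeight G f q := by
        rw [cycWeight_eq_chainW]
        calc chainW ρ (u :: (t'' ++ [u]))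
            ≤ chainW ρ (u :: (s ++ [u])) :=
              chainW_sublist htri s.length s t'' u u le_rfl htsub
          _ = chainW ρ (q.support ++ [u]) := by rw [hsupp]; simp
          _ ≤ walkWeight G f q + ρ u u := chainW_support_le hρ_adj q u
          _ = walkWeight G f q := by rw [hρ_self]; ring
      exact le_trans (csInf_le hSHC_bdd ⟨u :: t'', hnodup, hfin, rfl⟩) hle
    calc cycWeight ρ (a :: t) ≤ α * sInf SHC := hLw
      _ ≤ α * sInf SW := by
        apply mul_le_mul_of_nonneg_left hkey
        linarith
end
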